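/- Let λ_1,…,λ_d be distinct real numbers and fix ℓ ∈ {1,…,d}. Let (α_{s,k}), indexed by s, k ∈ {1,…,d}∖{ℓ}, be a matrix with all entries positive and of maximal rank d−1. Suppose r ∈ [0,1] and x_k ≥ 0 for k ≠ ℓ with Σ_{k≠ℓ} x_k = 1, and set ϖ = (1−r)λ_ℓ + r·Σ_{k≠ℓ} λ_k x_k. If Σ_{k≠ℓ} α_{s,k}(λ_k − ϖ)x_k = 0 for every s ≠ ℓ, then r = 1 and there exists j ≠ ℓ with x_j = 1 and x_k = 0 for k ∉ {ℓ, j}. -/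
import Mathlib

open Finset

lemma aux_inj {n : Type*} [Fintype n] [DecidableEq n] (A : Matrix n n ℝ)
    (h : A.rank = Fintype.card n) : Function.Injective A.mulVec := by
  have hsurj : Function.Surjective A.mulVecLin := by
    rw [← LinearMap.range_eq_top]
    apply Submodule.eq_top_of_finrank_eq
    rw [← Matrix.rank, h, Module.finrank_pi]
  exact (LinearMap.injective_iff_surjective).2 hsurj

/-- Let `λ_1,…,λ_d` be distinct reals, `ℓ` fixed, and `(α_{s,k})`
(`s, k ≠ ℓ`) a matrix with positive entries and maximal rank `d − 1`. Let `r ∈ [0,1]`,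
`x_k ≥ 0` with `Σ_{k≠ℓ} x_k = 1`, and `ϖ = (1−r)λ_ℓ + r·Σ_{k≠ℓ} λ_k x_k`. If
`Σ_{k≠ℓ} α_{s,k}(λ_k − ϖ)x_k = 0` for every `s ≠ ℓ`, then `r = 1` and there is `j ≠ ℓ`
with `x_j = 1` and `x_k = 0` for all other `k`. -/
theorem stmt15 {d : ℕ} (lam : Fin d → ℝ) (hdist : Function.Injective lam)
    (ℓ : Fin d)
    (α : {s : Fin d // s ≠ ℓ} → {k : Fin d // k ≠ ℓ} → ℝ)
    (hαpos : ∀ s k, 0 < α s k)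
    (hrank : (Matrix.of α).rank = d - 1)
    (r : ℝ) (hr : r ∈ Set.Icc (0 : ℝ) 1)
    (x : {k : Fin d // k ≠ ℓ} → ℝ)
    (hx : ∀ k, 0 ≤ x k) (hxsum : ∑ k, x k = 1)
    (hzero : ∀ s : {s : Fin d // s ≠ ℓ},
      ∑ k, α s k * (lam k.1 - ((1 - r) * lam ℓ + r * ∑ k', lam k'.1 * x k')) * x k = 0) :
    r = 1 ∧ ∃ j : {k : Fin d // k ≠ ℓ}, x j = 1 ∧ ∀ k, k ≠ j → x k = 0 := by
  set ϖ : ℝ := (1 - r) * lam ℓ + r * ∑ k', lam k'.1 * x k' with hϖ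
  have hcard : Fintype.card {k : Fin d // k ≠ ℓ} = d - 1 := by
    simp [Fintype.card_subtype_compl]
  have hinj : Function.Injective (Matrix.of α).mulVec :=
    aux_inj _ (by rw [hrank, hcard])
  set y : {k : Fin d // k ≠ ℓ} → ℝ := fun k => (lam k.1 - ϖ) * x k with hy
  have hy0 : y = 0 := by
    have : (Matrix.of α).mulVec y = (Matrix.of α).mulVec 0 := by
      rw [Matrix.mulVec_zero]
      funext s
      simpa [Matrix.mulVec, dotProduct, mul_assoc] using hzero s
    exact hinj this
  -- each k: x k = 0 or lam k = ϖ
  have hkey : ∀ k : {k : Fin d // k ≠ ℓ}, x k = 0 ∨ lam k.1 = ϖ := by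
    intro k
    have := congrFun hy0 k
    simp only [hy, Pi.zero_apply] at this
    rcases mul_eq_zero.1 this with h | h
    · right; linarith
    · left; exact h
  -- find j with x j ≠ 0
  have hne : ∃ j : {k : Fin d // k ≠ ℓ}, x j ≠ 0 := by
    by_contra h
    push_neg at h
    simp [h] at hxsum
  obtain ⟨j, hj⟩ := hne
  have hjϖ : lam j.1 = ϖ := (hkey j).resolve_left hj
  have hothers : ∀ k, k ≠ j → x k = 0 := by
    intro k hk
    rcases hkey k with h | h
    · exact h
    · exfalso; exact hk (Subtype.ext (hdist (h.trans hjϖ.symm)))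
  have hxj : x j = 1 := by
    rw [← hxsum]
    rw [Finset.sum_eq_single j]
    · intro b _ hb; exact hothers b hb
    · intro hb; exact absurd (Finset.mem_univ j) hb
  -- compute ϖ
  have hsum : ∑ k', lam k'.1 * x k' = lam j.1 := by
    rw [Finset.sum_eq_single j]
    · rw [hxj, mul_one]
    · intro b _ hb; rw [hothers b hb, mul_zero]
    · intro hb; exact absurd (Finset.mem_univ j) hb
  have hr1 : r = 1 := by
    have h1 : (1 - r) * lam ℓ + r * lam j.1 = lam j.1 := by
      conv_lhs => rw [← hsum, ← hϖ]
      rw [hjϖ]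
    have h2 : (1 - r) * (lam ℓ - lam j.1) = 0 := by ring_nf; linarith
    rcases mul_eq_zero.1 h2 with h | h
    · linarith
    · exfalso; exact j.2 (hdist (by linarith)).symm
  exact ⟨hr1, j, hxj, hothers⟩
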